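/- Let σ ∈ {-1,+1}^V, let x ∈ V, and let σ^x denote the configuration obtained from σ by flipping only the spin at x. Set r = (1−ε) + ε · max_{u∈V} ∑_{y∈V} tanh(β |J_{u,y}| / 2). Then there exists a coupling of P_{β,ε}(σ,·) and P_{β,ε}(σ^x,·), i.e. a probability distribution γ on pairs (τ,τ') ∈ {-1,+1}^V × {-1,+1}^V whose first marginal is P_{β,ε}(σ,·) and whose second marginal is P_{β,ε}(σ^x,·), such that the expected Hamming distance satisfies ∑_{(τ,τ')} γ(τ,τ') · |{y ∈ V : τ_y ≠ τ'_y}| ≤ r. -/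

import Mathlib

open Real Finset

variable {V : Type*}

/-- The real value of a Boolean spin: `true ↦ +1`, `false ↦ -1`. -/
def sp (b : Bool) : ℝ := if b then 1 else -1

/-- The cavity field `h̃_x(σ) = ∑_y J_{x,y} σ_y + h_x`. -/
noncomputable def cavity [Fintype V] (J : V → V → ℝ) (h : V → ℝ) (σ : V → Bool) (x : V) : ℝ :=
  (∑ y, J x y * sp (σ y)) + h x

/-- The ε-SCA flip probability `p_x(σ) = e^{-(β/2) h̃_x(σ) σ_x} / (2 cosh((β/2) h̃_x(σ)))`. -/
noncomputable def flipProb [Fintype V] (J : V → V → ℝ) (h : V → ℝ) (β : ℝ)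
    (σ : V → Bool) (x : V) : ℝ :=
  Real.exp (-(β / 2) * cavity J h σ x * sp (σ x)) / (2 * Real.cosh ((β / 2) * cavity J h σ x))

/-- The ε-SCA transition kernel
`P_{β,ε}(σ,τ) = ∏_{x : τ_x = -σ_x} ε p_x(σ) · ∏_{y : τ_y = σ_y} (1 - ε p_y(σ))`. -/
noncomputable def Peps [Fintype V] [DecidableEq V] (J : V → V → ℝ) (h : V → ℝ) (β ε : ℝ)
    (σ τ : V → Bool) : ℝ :=
  (∏ x ∈ univ.filter (fun x => τ x ≠ σ x), ε * flipProb J h β σ x) *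
    ∏ y ∈ univ.filter (fun y => τ y = σ y), (1 - ε * flipProb J h β σ y)

section Aux


lemma abs_tanh_le_one (x : ℝ) : |Real.tanh x| ≤ 1 := by
  rw [Real.tanh_eq_sinh_div_cosh, abs_div, abs_of_pos (Real.cosh_pos x),
    div_le_one (Real.cosh_pos x), abs_le]
  constructor
  · nlinarith [Real.cosh_add_sinh x, Real.exp_pos x]
  · nlinarith [Real.cosh_sub_sinh x, Real.exp_pos (-x)]

lemma tanh_nonneg' {x : ℝ} (hx : 0 ≤ x) : 0 ≤ Real.tanh x := by
  rw [Real.tanh_eq_sinh_div_cosh]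
  exact div_nonneg (Real.sinh_nonneg_iff.mpr hx) (Real.cosh_pos x).le

lemma tanh_diff_le (a b : ℝ) (hab : b ≤ a) :
    Real.tanh a - Real.tanh b ≤ 2 * Real.tanh ((a - b) / 2) := by
  have hca := Real.cosh_pos a
  have hcb := Real.cosh_pos b
  have hch := Real.cosh_pos ((a - b) / 2)
  have h1 : Real.tanh a - Real.tanh b = Real.sinh (a - b) / (Real.cosh a * Real.cosh b) := by
    rw [Real.tanh_eq_sinh_div_cosh, Real.tanh_eq_sinh_div_cosh, Real.sinh_sub]
    field_simp
  have h2 : Real.cosh ((a - b) / 2) ^ 2 ≤ Real.cosh a * Real.cosh b := by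
    have e1 := Real.cosh_add a b
    have e2 := Real.cosh_sub a b
    have e3 : Real.cosh (a - b) = Real.cosh ((a-b)/2) ^ 2 + Real.sinh ((a-b)/2) ^ 2 := by
      rw [← Real.cosh_two_mul]; ring_nf
    have e4 := Real.cosh_sq ((a-b)/2)
    have e5 := Real.one_le_cosh (a + b)
    nlinarith
  have h3 : 2 * Real.tanh ((a - b) / 2) = Real.sinh (a - b) / Real.cosh ((a - b) / 2) ^ 2 := by
    rw [Real.tanh_eq_sinh_div_cosh]
    have : Real.sinh (a - b) = 2 * Real.sinh ((a-b)/2) * Real.cosh ((a-b)/2) := by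
      rw [← Real.sinh_two_mul]; ring_nf
    rw [this]; field_simp
  rw [h1, h3]
  have hs : 0 ≤ Real.sinh (a - b) := Real.sinh_nonneg_iff.mpr (by linarith)
  exact div_le_div_of_nonneg_left hs (by positivity) h2

lemma tanh_sub_nonneg {a b : ℝ} (hab : b ≤ a) : 0 ≤ Real.tanh a - Real.tanh b := by
  have h1 : Real.tanh a - Real.tanh b = Real.sinh (a - b) / (Real.cosh a * Real.cosh b) := by
    rw [Real.tanh_eq_sinh_div_cosh, Real.tanh_eq_sinh_div_cosh, Real.sinh_sub]
    field_simp
  rw [h1]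
  exact div_nonneg (Real.sinh_nonneg_iff.mpr (by linarith))
    (mul_pos (Real.cosh_pos a) (Real.cosh_pos b)).le

lemma abs_tanh_diff_le (a b : ℝ) :
    |Real.tanh a - Real.tanh b| ≤ 2 * Real.tanh (|a - b| / 2) := by
  rcases le_total b a with hab | hab
  · rw [abs_of_nonneg (sub_nonneg.mpr hab), abs_of_nonneg (tanh_sub_nonneg hab)]
    exact tanh_diff_le a b hab
  · rw [abs_sub_comm, abs_sub_comm a b, abs_of_nonneg (sub_nonneg.mpr hab),
      abs_of_nonneg (tanh_sub_nonneg hab)]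
    exact tanh_diff_le b a hab
-- maximal coupling of two Bool distributions
noncomputable def mc (a b : Bool → ℝ) : Bool → Bool → ℝ :=
  fun s t => if s = t then min (a s) (b s) else max (a s - b s) 0

lemma mc_nonneg {a b : Bool → ℝ} (ha : ∀ s, 0 ≤ a s) (hb : ∀ s, 0 ≤ b s) (s t : Bool) :
    0 ≤ mc a b s t := by
  unfold mc; split
  · exact le_min (ha s) (hb s)
  · exact le_max_right _ _

lemma min_add_max_sub (u v : ℝ) : min u v + max (u - v) 0 = u := by
  rcases le_total u v with hc | hc
  · rw [min_eq_left hc, max_eq_right (by linarith)]; ring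
  · rw [min_eq_right hc, max_eq_left (by linarith)]; ring

lemma mc_fst (a b : Bool → ℝ) (s : Bool) : ∑ t, mc a b s t = a s := by
  rw [Fintype.sum_bool]
  cases s <;> simp [mc] <;>
    [rw [add_comm]; skip] <;> exact min_add_max_sub _ _

lemma mc_snd {a b : Bool → ℝ} (ha1 : a true + a false = 1) (hb1 : b true + b false = 1)
    (t : Bool) : ∑ s, mc a b s t = b t := by
  rw [Fintype.sum_bool]
  cases t <;> simp [mc] <;> rcases le_total (a true) (b true) with hc | hc
  · have e1 : max (a true - b true) 0 = 0 := max_eq_right (by linarith)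
    have e2 : min (a false) (b false) = b false := min_eq_right (by linarith)
    rw [e1, e2]; linarith
  · have e1 : max (a true - b true) 0 = a true - b true := max_eq_left (by linarith)
    have e2 : min (a false) (b false) = a false := min_eq_left (by linarith)
    rw [e1, e2]; linarith
  · have e1 : min (a true) (b true) = a true := min_eq_left hc
    have e2 : max (a false - b false) 0 = a false - b false := max_eq_left (by linarith)
    rw [e1, e2]; linarith
  · have e1 : min (a true) (b true) = b true := min_eq_right hc
    have e2 : max (a false - b false) 0 = 0 := max_eq_right (by linarith)
    rw [e1, e2]; linarith

lemma mc_disag {a b : Bool → ℝ} (ha1 : a true + a false = 1) (hb1 : b true + b false = 1) :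
    ∑ s, ∑ t, (if s = t then 0 else mc a b s t) = |a true - b true| := by
  simp [mc, Fintype.sum_bool]
  rcases le_total (a true) (b true) with hc | hc
  · have e1 : max (a true - b true) 0 = 0 := max_eq_right (by linarith)
    have e2 : max (a false - b false) 0 = a false - b false := max_eq_left (by linarith)
    rw [e1, e2, abs_of_nonpos (by linarith)]; linarith
  · have e1 : max (a true - b true) 0 = a true - b true := max_eq_left (by linarith)
    have e2 : max (a false - b false) 0 = 0 := max_eq_right (by linarith)
    rw [e1, e2, abs_of_nonneg (by linarith)]; linarith


-- flipProb via tanh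
lemma flipProb_eq [Fintype V] (J : V → V → ℝ) (h : V → ℝ) (β : ℝ) (σ : V → Bool) (y : V) :
    flipProb J h β σ y
      = (1 - sp (σ y) * Real.tanh (β / 2 * cavity J h σ y)) / 2 := by
  have hc := Real.cosh_pos (β / 2 * cavity J h σ y)
  rw [flipProb, Real.tanh_eq_sinh_div_cosh]
  cases hb : σ y <;> simp only [sp, if_pos, if_neg, Bool.false_eq_true, ite_true, ite_false]
  · rw [show -(β / 2) * cavity J h σ y * (-1) = β / 2 * cavity J h σ y by ring,
      ← Real.cosh_add_sinh]
    field_simp; ring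
  · rw [show -(β / 2) * cavity J h σ y * 1 = -(β / 2 * cavity J h σ y) by ring,
      ← Real.cosh_sub_sinh]
    field_simp

lemma flipProb_mem [Fintype V] (J : V → V → ℝ) (h : V → ℝ) (β : ℝ) (σ : V → Bool) (y : V) :
    flipProb J h β σ y ∈ Set.Icc (0:ℝ) 1 := by
  rw [flipProb_eq]
  have h1 : |Real.tanh (β / 2 * cavity J h σ y)| ≤ 1 := abs_tanh_le_one _
  have h2 : |sp (σ y)| = 1 := by cases σ y <;> simp [sp]
  have h3 : |sp (σ y) * Real.tanh (β / 2 * cavity J h σ y)| ≤ 1 := by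
    rw [abs_mul, h2, one_mul]; exact h1
  rw [abs_le] at h3
  constructor <;> [linarith [h3.2]; linarith [h3.1]]

-- double sum-product exchange over Boolean configurations
lemma sum_sum_prod_eq [Fintype V] [DecidableEq V] (F : V → Bool → Bool → ℝ) :
    ∑ τ : V → Bool, ∑ τ' : V → Bool, ∏ z, F z (τ z) (τ' z)
      = ∏ z, (∑ s, ∑ t, F z s t) := by
  have h1 : ∀ τ : V → Bool, ∑ τ' : V → Bool, ∏ z, F z (τ z) (τ' z)
      = ∏ z, ∑ t, F z (τ z) t := fun τ =>
    (Fintype.prod_sum (κ := fun _ : V => Bool) (fun z t => F z (τ z) t)).symm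
  calc ∑ τ : V → Bool, ∑ τ' : V → Bool, ∏ z, F z (τ z) (τ' z)
      = ∑ τ : V → Bool, ∏ z, ∑ t, F z (τ z) t := by
        exact Finset.sum_congr rfl fun τ _ => h1 τ
    _ = ∏ z, ∑ s, ∑ t, F z s t :=
      (Fintype.prod_sum (κ := fun _ : V => Bool) (fun z s => ∑ t, F z s t)).symm

-- Peps as a full product
lemma Peps_eq [Fintype V] [DecidableEq V] (J : V → V → ℝ) (h : V → ℝ) (β ε : ℝ)
    (σ τ : V → Bool) :
    Peps J h β ε σ τ
      = ∏ y, (if τ y = σ y then 1 - ε * flipProb J h β σ y else ε * flipProb J h β σ y) := by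
  rw [Peps, Finset.prod_filter, Finset.prod_filter, ← Finset.prod_mul_distrib]
  refine Finset.prod_congr rfl fun y _ => ?_
  by_cases hy : τ y = σ y <;> simp [hy]

-- the per-site distribution

noncomputable def Ad [Fintype V] (J : V → V → ℝ) (h : V → ℝ) (β ε : ℝ) (σ : V → Bool)
    (y : V) (b : Bool) : ℝ :=
  if b = σ y then 1 - ε * flipProb J h β σ y else ε * flipProb J h β σ y

lemma Ad_nonneg [Fintype V] (J : V → V → ℝ) (h : V → ℝ) (β : ℝ) {ε : ℝ} (σ : V → Bool)
    (hε : ε ∈ Set.Ioc (0:ℝ) 1) (y : V) (b : Bool) : 0 ≤ Ad J h β ε σ y b := by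
  obtain ⟨h0, h1⟩ := flipProb_mem J h β σ y
  have he0 : (0:ℝ) ≤ ε := hε.1.le
  have : ε * flipProb J h β σ y ≤ 1 :=
    le_trans (mul_le_mul_of_nonneg_left h1 he0) (by linarith [hε.2])
  unfold Ad; split
  · linarith
  · positivity

lemma Ad_norm [Fintype V] (J : V → V → ℝ) (h : V → ℝ) (β ε : ℝ) (σ : V → Bool) (y : V) :
    Ad J h β ε σ y true + Ad J h β ε σ y false = 1 := by
  unfold Ad; cases hb : σ y <;> simp [hb]

lemma Peps_eq_prod_Ad [Fintype V] [DecidableEq V] (J : V → V → ℝ) (h : V → ℝ) (β ε : ℝ)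
    (σ τ : V → Bool) : Peps J h β ε σ τ = ∏ y, Ad J h β ε σ y (τ y) :=
  Peps_eq J h β ε σ τ

lemma cavity_update [Fintype V] [DecidableEq V] (J : V → V → ℝ) (h : V → ℝ) (σ : V → Bool)
    (x y : V) :
    cavity J h (Function.update σ x (!σ x)) y
      = cavity J h σ y + J y x * (sp (!σ x) - sp (σ x)) := by
  unfold cavity
  have : ∑ z, J y z * sp (Function.update σ x (!σ x) z)
      = ∑ z, (J y z * sp (σ z) + if z = x then J y x * (sp (!σ x) - sp (σ x)) else 0) := by
    refine Finset.sum_congr rfl fun z _ => ?_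
    by_cases hz : z = x
    · subst hz; rw [Function.update_self, if_pos rfl]; ring
    · rw [Function.update_of_ne hz, if_neg hz]; ring
  rw [this, Finset.sum_add_distrib, Finset.sum_ite_eq' univ x
    (fun _ => J y x * (sp (!σ x) - sp (σ x)))]
  simp; ring

lemma flipProb_flip [Fintype V] [DecidableEq V] (J : V → V → ℝ) (h : V → ℝ) (β : ℝ)
    (σ : V → Bool) (x : V) (hJxx : J x x = 0) :
    flipProb J h β (Function.update σ x (!σ x)) x = 1 - flipProb J h β σ x := by
  have hcav : cavity J h (Function.update σ x (!σ x)) x = cavity J h σ x := by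
    rw [cavity_update, hJxx]; ring
  rw [flipProb_eq, flipProb_eq, hcav, Function.update_self]
  cases σ x <;> simp [sp] <;> ring

-- the site-x disagreement
lemma disag_x [Fintype V] [DecidableEq V] (J : V → V → ℝ) (h : V → ℝ) (β : ℝ) {ε : ℝ}
    (σ : V → Bool) (x : V) (hJxx : J x x = 0) (hε : ε ∈ Set.Ioc (0:ℝ) 1) :
    |Ad J h β ε σ x true - Ad J h β ε (Function.update σ x (!σ x)) x true| = 1 - ε := by
  have hf := flipProb_flip J h β σ x hJxx
  obtain ⟨h0, h1⟩ := flipProb_mem J h β σ x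
  have he0 : (0:ℝ) ≤ ε := hε.1.le
  have he1 : ε ≤ 1 := hε.2
  unfold Ad
  rw [Function.update_self, hf]
  cases hb : σ x <;> simp only [hb, Bool.not_false, Bool.not_true] <;> norm_num
  · rw [show ε * flipProb J h β σ x - (1 - ε * (1 - flipProb J h β σ x)) = -(1 - ε) by ring,
      abs_neg, abs_of_nonneg (by linarith)]
  · rw [show 1 - ε * flipProb J h β σ x - ε * (1 - flipProb J h β σ x) = 1 - ε by ring,
      abs_of_nonneg (by linarith)]

-- the off-site disagreement
lemma disag_ne [Fintype V] [DecidableEq V] (J : V → V → ℝ) (h : V → ℝ) {β : ℝ} {ε : ℝ}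
    (σ : V → Bool) (x y : V) (hyx : y ≠ x) (hβ : 0 ≤ β) (hε0 : 0 ≤ ε) :
    |Ad J h β ε σ y true - Ad J h β ε (Function.update σ x (!σ x)) y true|
      ≤ ε * Real.tanh (β * |J y x| / 2) := by
  set σ' := Function.update σ x (!σ x) with hσ'
  have hσy : σ' y = σ y := Function.update_of_ne hyx _ _
  set c := β / 2 * cavity J h σ y with hc
  set c' := β / 2 * cavity J h σ' y with hc'
  have hdiff : Ad J h β ε σ y true - Ad J h β ε σ' y true
      = ε * ((Real.tanh c - Real.tanh c') / 2) := by
    unfold Ad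
    rw [hσy, flipProb_eq, flipProb_eq, ← hc, ← hc']
    cases hb : σ y <;> simp only [hσy, hb, sp, Bool.true_eq_false, Bool.false_eq_true,
      ite_true, ite_false, if_neg, if_pos] <;> norm_num <;> ring
  have habs : |Ad J h β ε σ y true - Ad J h β ε σ' y true|
      = ε * (|Real.tanh c - Real.tanh c'| / 2) := by
    rw [hdiff, abs_mul, abs_of_nonneg hε0, abs_div]
    norm_num
  have harg : |c - c'| = β * |J y x| := by
    have := cavity_update J h σ x y
    rw [← hσ'] at this
    have hsp : |sp (!σ x) - sp (σ x)| = 2 := by cases σ x <;> norm_num [sp]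
    rw [hc, hc', ← mul_sub, abs_mul, this,
      show cavity J h σ y - (cavity J h σ y + J y x * (sp (!σ x) - sp (σ x)))
        = -(J y x * (sp (!σ x) - sp (σ x))) by ring, abs_neg, abs_mul, hsp,
      abs_of_nonneg (by linarith : (0:ℝ) ≤ β / 2)]
    ring
  rw [habs]
  have := abs_tanh_diff_le c c'
  rw [harg] at this
  have h2 : |Real.tanh c - Real.tanh c'| / 2 ≤ Real.tanh (β * |J y x| / 2) := by
    rw [show β * |J y x| / 2 = β * |J y x| / 2 by ring]
    linarith [this]
  exact mul_le_mul_of_nonneg_left h2 hε0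

end Aux

/-- with `r = (1−ε) + ε·max_u ∑_y tanh(β|J_{u,y}|/2)`, there exists a coupling γ
of `P_{β,ε}(σ,·)` and `P_{β,ε}(σ^x,·)` whose expected Hamming distance is at most r. -/
theorem epsSCA_coupling_single_flip [Fintype V] [DecidableEq V] [Nonempty V]
    (G : SimpleGraph V) (J : V → V → ℝ) (h : V → ℝ)
    (hsym : ∀ x y, J x y = J y x)
    (hJG : ∀ x y, ¬ G.Adj x y → J x y = 0)
    (β : ℝ) (hβ : 0 ≤ β) (ε : ℝ) (hε : ε ∈ Set.Ioc (0 : ℝ) 1)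
    (σ : V → Bool) (x : V) :
    ∃ γ : (V → Bool) × (V → Bool) → ℝ,
      (∀ p, 0 ≤ γ p) ∧
      (∑ p : (V → Bool) × (V → Bool), γ p = 1) ∧
      (∀ τ, ∑ τ' : V → Bool, γ (τ, τ') = Peps J h β ε σ τ) ∧
      (∀ τ', ∑ τ : V → Bool, γ (τ, τ') = Peps J h β ε (Function.update σ x (!σ x)) τ') ∧
      ∑ p : (V → Bool) × (V → Bool),
          γ p * ((univ.filter (fun y => p.1 y ≠ p.2 y)).card : ℝ) ≤
        (1 - ε) + ε * univ.sup' univ_nonempty (fun u => ∑ y, Real.tanh (β * |J u y| / 2)) := by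
  classical
  obtain ⟨hε0, hε1⟩ := hε
  have hJxx : J x x = 0 := hJG x x (G.loopless.irrefl x)
  set σ' := Function.update σ x (!σ x) with hσ'
  set A : V → Bool → ℝ := Ad J h β ε σ with hA
  set B : V → Bool → ℝ := Ad J h β ε σ' with hB
  set C : V → Bool → Bool → ℝ := fun y => mc (A y) (B y) with hC
  have hA0 : ∀ y b, 0 ≤ A y b := Ad_nonneg J h β σ ⟨hε0, hε1⟩
  have hB0 : ∀ y b, 0 ≤ B y b := Ad_nonneg J h β σ' ⟨hε0, hε1⟩
  have hA1 : ∀ y, A y true + A y false = 1 := Ad_norm J h β ε σ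
  have hB1 : ∀ y, B y true + B y false = 1 := Ad_norm J h β ε σ'
  have hCfst : ∀ y s, ∑ t, C y s t = A y s := fun y s => mc_fst _ _ s
  have hCsnd : ∀ y t, ∑ s, C y s t = B y t := fun y t => mc_snd (hA1 y) (hB1 y) t
  refine ⟨fun q => ∏ y, C y (q.1 y) (q.2 y), ?_, ?_, ?_, ?_, ?_⟩
  · intro q
    exact Finset.prod_nonneg fun y _ => mc_nonneg (hA0 y) (hB0 y) _ _
  · -- total mass
    rw [Fintype.sum_prod_type]
    have he : ∑ τ : V → Bool, ∑ τ' : V → Bool, ∏ z, C z (τ z) (τ' z)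
        = ∏ z, (∑ s, ∑ t, C z s t) := sum_sum_prod_eq (fun z s t => C z s t)
    rw [he]
    refine Finset.prod_eq_one fun y _ => ?_
    have : ∑ s, ∑ t, C y s t = ∑ s, A y s := Finset.sum_congr rfl fun s _ => hCfst y s
    rw [this, Fintype.sum_bool, hA1 y]
  · -- first marginal
    intro τ
    have h1 : ∑ τ' : V → Bool, ∏ y, C y (τ y) (τ' y) = ∏ y, ∑ t, C y (τ y) t :=
      (Fintype.prod_sum (κ := fun _ : V => Bool) (fun y t => C y (τ y) t)).symm
    rw [h1, Peps_eq_prod_Ad]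
    exact Finset.prod_congr rfl fun y _ => hCfst y (τ y)
  · -- second marginal
    intro τ'
    have h1 : ∑ τ : V → Bool, ∏ y, C y (τ y) (τ' y) = ∏ y, ∑ s, C y s (τ' y) :=
      (Fintype.prod_sum (κ := fun _ : V => Bool) (fun y s => C y s (τ' y))).symm
    rw [h1, Peps_eq_prod_Ad]
    exact Finset.prod_congr rfl fun y _ => hCsnd y (τ' y)
  · -- expected Hamming distance
    have hcard : ∀ q : (V → Bool) × (V → Bool),
        ((univ.filter fun y => q.1 y ≠ q.2 y).card : ℝ)
          = ∑ y, (if q.1 y = q.2 y then (0:ℝ) else 1) := by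
      intro q
      rw [Finset.card_filter]
      push_cast
      exact Finset.sum_congr rfl fun y _ => by by_cases hy : q.1 y = q.2 y <;> simp [hy]
    -- per-site disagreement mass
    have hsite : ∀ y : V,
        (∑ q : (V → Bool) × (V → Bool),
          (∏ z, C z (q.1 z) (q.2 z)) * (if q.1 y = q.2 y then (0:ℝ) else 1))
        = ∑ s, ∑ t, (if s = t then (0:ℝ) else C y s t) := by
      intro y
      set F : V → Bool → Bool → ℝ :=
        fun z s t => if z = y then (if s = t then (0:ℝ) else C z s t) else C z s t with hF
      have hkey : ∀ τ τ' : V → Bool,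
          (∏ z, C z (τ z) (τ' z)) * (if τ y = τ' y then (0:ℝ) else 1)
            = ∏ z, F z (τ z) (τ' z) := by
        intro τ τ'
        rw [← Finset.prod_erase_mul univ (fun z => C z (τ z) (τ' z)) (Finset.mem_univ y),
            ← Finset.prod_erase_mul univ (fun z => F z (τ z) (τ' z)) (Finset.mem_univ y)]
        have h1 : ∏ z ∈ univ.erase y, F z (τ z) (τ' z)
            = ∏ z ∈ univ.erase y, C z (τ z) (τ' z) :=
          Finset.prod_congr rfl fun z hz => by
            simp [hF, (Finset.mem_erase.mp hz).1]
        rw [h1]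
        by_cases hst : τ y = τ' y <;> simp [hF, hst]
      rw [Fintype.sum_prod_type]
      calc ∑ τ : V → Bool, ∑ τ' : V → Bool,
              (∏ z, C z (τ z) (τ' z)) * (if τ y = τ' y then (0:ℝ) else 1)
          = ∑ τ : V → Bool, ∑ τ' : V → Bool, ∏ z, F z (τ z) (τ' z) := by
            exact Finset.sum_congr rfl fun τ _ => Finset.sum_congr rfl fun τ' _ => hkey τ τ'
        _ = ∏ z, (∑ s, ∑ t, F z s t) := sum_sum_prod_eq F
        _ = ∑ s, ∑ t, (if s = t then (0:ℝ) else C y s t) := by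
            have hz : ∀ z : V, (∑ s, ∑ t, F z s t)
                = if z = y then (∑ s, ∑ t, (if s = t then (0:ℝ) else C y s t)) else 1 := by
              intro z
              by_cases hzy : z = y
              · subst hzy; simp [hF]
              · rw [if_neg hzy]
                have : ∑ s, ∑ t, F z s t = ∑ s, ∑ t, C z s t := by
                  refine Finset.sum_congr rfl fun s _ => Finset.sum_congr rfl fun t _ => ?_
                  simp [hF, hzy]
                rw [this]
                have h2 : ∑ s, ∑ t, C z s t = ∑ s, A z s :=
                  Finset.sum_congr rfl fun s _ => hCfst z s
                rw [h2, Fintype.sum_bool, hA1 z]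
            rw [Finset.prod_congr rfl fun z _ => hz z]
            simp
    -- the per-site bound
    have hdg : ∀ y : V, (∑ s, ∑ t, (if s = t then (0:ℝ) else C y s t))
        ≤ (if y = x then 1 - ε else ε * Real.tanh (β * |J x y| / 2)) := by
      intro y
      rw [hC]
      rw [mc_disag (hA1 y) (hB1 y)]
      by_cases hy : y = x
      · subst hy
        rw [if_pos rfl, hA, hB, hσ']
        exact (disag_x J h β σ y hJxx ⟨hε0, hε1⟩).le
      · rw [if_neg hy, hA, hB, hσ', hsym x y]
        exact disag_ne J h σ x y hy hβ hε0.le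
    -- put it together
    calc ∑ q : (V → Bool) × (V → Bool),
            (∏ z, C z (q.1 z) (q.2 z)) * ((univ.filter fun y => q.1 y ≠ q.2 y).card : ℝ)
        = ∑ q : (V → Bool) × (V → Bool), ∑ y,
            (∏ z, C z (q.1 z) (q.2 z)) * (if q.1 y = q.2 y then (0:ℝ) else 1) := by
          refine Finset.sum_congr rfl fun q _ => ?_
          rw [hcard q, Finset.mul_sum]
      _ = ∑ y, ∑ q : (V → Bool) × (V → Bool),
            (∏ z, C z (q.1 z) (q.2 z)) * (if q.1 y = q.2 y then (0:ℝ) else 1) :=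
          Finset.sum_comm
      _ = ∑ y, ∑ s, ∑ t, (if s = t then (0:ℝ) else C y s t) :=
          Finset.sum_congr rfl fun y _ => hsite y
      _ ≤ ∑ y, (if y = x then 1 - ε else ε * Real.tanh (β * |J x y| / 2)) :=
          Finset.sum_le_sum fun y _ => hdg y
      _ = (1 - ε) + ∑ y ∈ univ.erase x, ε * Real.tanh (β * |J x y| / 2) := by
          rw [← Finset.add_sum_erase univ _ (Finset.mem_univ x), if_pos rfl]
          congr 1
          exact Finset.sum_congr rfl fun y hy => if_neg (Finset.mem_erase.mp hy).1
      _ ≤ (1 - ε) + ε * ∑ y, Real.tanh (β * |J x y| / 2) := by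
          rw [← Finset.mul_sum]
          have hsub : ∑ y ∈ univ.erase x, Real.tanh (β * |J x y| / 2)
              ≤ ∑ y, Real.tanh (β * |J x y| / 2) :=
            Finset.sum_le_sum_of_subset_of_nonneg (Finset.subset_univ _)
              (fun y _ _ => tanh_nonneg' (by positivity))
          have := mul_le_mul_of_nonneg_left hsub hε0.le
          linarith
      _ ≤ (1 - ε) + ε * univ.sup' univ_nonempty (fun u => ∑ y, Real.tanh (β * |J u y| / 2)) := by
          have := Finset.le_sup' (fun u => ∑ y, Real.tanh (β * |J u y| / 2)) (Finset.mem_univ x)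
          have := mul_le_mul_of_nonneg_left this hε0.le
          linarith
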